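/- For n ≥ 2, define H_n(q) = (1/n)(1 − (1−q)^n − n q (1−q)^(n−1)) for q ∈ [0,1]. Then H_n(q) = ∫₀^q (n−1)(1−t)^(n−2) t dt, and there exist positive constants c, C (independent of n and q) such that c·min{n q², 1/n} ≤ H_n(q) ≤ C·min{n q², 1/n} for all q ∈ [0,1] and all n ≥ 2. -/

import Mathlib

/-- `H_n(q) = (1/n)(1 − (1−q)^n − n q (1−q)^(n−1))`. -/
noncomputable def Hfun (n : ℕ) (q : ℝ) : ℝ :=
  (1 / n) * (1 - (1 - q) ^ n - n * q * (1 - q) ^ (n - 1))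

lemma Hfun_hasDerivAt (n : ℕ) (hn : 2 ≤ n) (t : ℝ) :
    HasDerivAt (Hfun n) ((n - 1 : ℝ) * (1 - t) ^ (n - 2) * t) t := by
  have hne : (n : ℝ) ≠ 0 := by positivity
  have h1 : HasDerivAt (fun t : ℝ => 1 - t) (-1) t := by
    simpa using (hasDerivAt_id t).const_sub 1
  have h2 := h1.pow n
  have h3 := h1.pow (n - 1)
  have h4 := (hasDerivAt_id t).mul h3
  have h5 := h4.const_mul (n : ℝ)
  have h6 := (((hasDerivAt_const t (1:ℝ)).sub h2).sub h5).const_mul (1 / (n : ℝ))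
  have hfe : Hfun n = fun t : ℝ =>
      (1 / n) * (1 - (1 - t) ^ n - (n : ℝ) * (t * (1 - t) ^ (n - 1))) := by
    funext x; show (1 / (n:ℝ)) * _ = _; ring
  rw [hfe]
  convert h6 using 1
  · exact rfl
  · exact rfl
  · exact rfl
  have e1 : n - 1 - 1 = n - 2 := by omega
  have e2 : ((n - 1 : ℕ) : ℝ) = (n : ℝ) - 1 := by
    push_cast [Nat.cast_sub (by omega : 1 ≤ n)]; ring
  rw [e1, e2]
  simp only [Pi.pow_apply, id]
  field_simp
  ring

lemma Hfun_cont (n : ℕ) :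
    Continuous (fun t : ℝ => (n - 1 : ℝ) * (1 - t) ^ (n - 2) * t) := by
  continuity

lemma Hfun_sub (n : ℕ) (hn : 2 ≤ n) (a b : ℝ) :
    Hfun n b - Hfun n a = ∫ t in a..b, (n - 1 : ℝ) * (1 - t) ^ (n - 2) * t :=
  (intervalIntegral.integral_eq_sub_of_hasDerivAt
    (fun t _ => Hfun_hasDerivAt n hn t) ((Hfun_cont n).intervalIntegrable a b)).symm

lemma Hfun_eq (n : ℕ) (hn : 2 ≤ n) (q : ℝ) :
    Hfun n q = ∫ t in (0:ℝ)..q, (n - 1 : ℝ) * (1 - t) ^ (n - 2) * t := by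
  have h0 : Hfun n 0 = 0 := by simp [Hfun]
  have := Hfun_sub n hn 0 q
  rw [h0, sub_zero] at this
  exact this

lemma Hfun_mono (n : ℕ) (hn : 2 ≤ n) {a b : ℝ} (ha : 0 ≤ a) (hab : a ≤ b)
    (hb : b ≤ 1) : Hfun n a ≤ Hfun n b := by
  have hnn : ∀ t ∈ Set.Icc a b, 0 ≤ (n - 1 : ℝ) * (1 - t) ^ (n - 2) * t := by
    intro t ht
    have h1 : (0:ℝ) ≤ (n:ℝ) - 1 := by
      have : (2:ℝ) ≤ n := by exact_mod_cast hn
      linarith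
    have h2 : (0:ℝ) ≤ 1 - t := by linarith [ht.2]
    have h3 : (0:ℝ) ≤ t := le_trans ha ht.1
    positivity
  have h := intervalIntegral.integral_nonneg (μ := MeasureTheory.volume) hab hnn
  rw [← Hfun_sub n hn a b] at h
  linarith

lemma base_pow (n : ℕ) (hn : 2 ≤ n) : (1/3 : ℝ) ≤ (1 - 1/(n:ℝ)) ^ (n - 2) := by
  have hn1 : (1:ℝ) ≤ (n:ℝ) - 1 := by
    have : (2:ℝ) ≤ n := by exact_mod_cast hn
    linarith
  have hne : (n:ℝ) - 1 ≠ 0 := by linarith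
  have hnpos : (0:ℝ) < n := by positivity
  have hA : ((n:ℝ)/((n:ℝ)-1)) ^ (n - 2) ≤ 3 := by
    have key : (n:ℝ)/((n:ℝ)-1) = 1/((n:ℝ)-1) + 1 := by field_simp; ring
    calc ((n:ℝ)/((n:ℝ)-1)) ^ (n - 2)
        ≤ (Real.exp (1/((n:ℝ)-1))) ^ (n - 2) := by
          apply pow_le_pow_left₀ (by positivity)
          rw [key]; exact Real.add_one_le_exp _
      _ = Real.exp ((n - 2 : ℕ) * (1/((n:ℝ)-1))) := by
          rw [Real.exp_nat_mul]
      _ ≤ Real.exp 1 := by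
          apply Real.exp_le_exp.mpr
          have hc : ((n - 2 : ℕ) : ℝ) = (n:ℝ) - 2 := by
            push_cast [Nat.cast_sub hn]; ring
          rw [hc, mul_one_div, div_le_one (by linarith)]
          linarith
      _ ≤ 3 := by
          have := Real.exp_one_lt_d9
          linarith
  have hApos : (0:ℝ) < ((n:ℝ)/((n:ℝ)-1)) ^ (n - 2) := by positivity
  have hbase : (1 - 1/(n:ℝ)) = (((n:ℝ)/((n:ℝ)-1)))⁻¹ := by
    field_simp
  rw [hbase, inv_pow]
  simpa [one_div] using one_div_le_one_div_of_le hApos hA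

lemma Hfun_lower_small (n : ℕ) (hn : 2 ≤ n) {q : ℝ} (hq0 : 0 ≤ q)
    (hq : q ≤ 1/(n:ℝ)) : (1/12 : ℝ) * ((n:ℝ) * q ^ 2) ≤ Hfun n q := by
  have hnpos : (0:ℝ) < n := by positivity
  have hn2 : (2:ℝ) ≤ n := by exact_mod_cast hn
  rw [Hfun_eq n hn q]
  have hgle : ∀ t ∈ Set.Icc (0:ℝ) q,
      ((n:ℝ) - 1) * (1/3) * t ≤ (n - 1 : ℝ) * (1 - t) ^ (n - 2) * t := by
    intro t ht
    have ht1 : t ≤ 1/(n:ℝ) := le_trans ht.2 hq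
    have hinv : 1/(n:ℝ) ≤ 1 := by
      rw [div_le_one hnpos]; linarith
    have hpow : (1/3 : ℝ) ≤ (1 - t) ^ (n - 2) := by
      calc (1/3:ℝ) ≤ (1 - 1/(n:ℝ)) ^ (n - 2) := base_pow n hn
        _ ≤ (1 - t) ^ (n - 2) := by
            apply pow_le_pow_left₀ (by linarith) (by linarith)
    have hn1 : (0:ℝ) ≤ (n:ℝ) - 1 := by linarith
    have := mul_le_mul_of_nonneg_left hpow hn1
    exact mul_le_mul_of_nonneg_right this ht.1
  have hint : ∫ t in (0:ℝ)..q, ((n:ℝ) - 1) * (1/3) * t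
      ≤ ∫ t in (0:ℝ)..q, (n - 1 : ℝ) * (1 - t) ^ (n - 2) * t := by
    apply intervalIntegral.integral_mono_on hq0
      ((by continuity : Continuous fun t : ℝ => ((n:ℝ) - 1) * (1/3) * t).intervalIntegrable 0 q)
      ((Hfun_cont n).intervalIntegrable 0 q) hgle
  have hcalc : ∫ t in (0:ℝ)..q, ((n:ℝ) - 1) * (1/3) * t
      = ((n:ℝ) - 1) * (1/3) * (q ^ 2 / 2) := by
    rw [intervalIntegral.integral_const_mul, integral_id]
    ring
  rw [hcalc] at hint
  nlinarith [sq_nonneg q]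

lemma Hfun_upper1 (n : ℕ) (hn : 2 ≤ n) {q : ℝ} (hq0 : 0 ≤ q) (hq1 : q ≤ 1) :
    Hfun n q ≤ 1/(n:ℝ) := by
  have hnpos : (0:ℝ) < n := by positivity
  have h1 : (0:ℝ) ≤ (1 - q) ^ n := pow_nonneg (by linarith) n
  have h2 : (0:ℝ) ≤ (n:ℝ) * q * (1 - q) ^ (n - 1) :=
    mul_nonneg (mul_nonneg (by positivity) hq0) (pow_nonneg (by linarith) _)
  have : (1:ℝ) - (1 - q) ^ n - (n:ℝ) * q * (1 - q) ^ (n - 1) ≤ 1 := by linarith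
  calc Hfun n q ≤ (1/(n:ℝ)) * 1 := by
        unfold Hfun
        apply mul_le_mul_of_nonneg_left this (by positivity)
    _ = 1/(n:ℝ) := by ring

lemma Hfun_upper2 (n : ℕ) (hn : 2 ≤ n) {q : ℝ} (hq0 : 0 ≤ q) (hq1 : q ≤ 1) :
    Hfun n q ≤ (n:ℝ) * q ^ 2 := by
  have hnpos : (0:ℝ) < n := by positivity
  rw [Hfun_eq n hn q]
  have hgle : ∀ t ∈ Set.Icc (0:ℝ) q,
      (n - 1 : ℝ) * (1 - t) ^ (n - 2) * t ≤ (n:ℝ) * t := by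
    intro t ht
    have ht1 : t ≤ 1 := le_trans ht.2 hq1
    have hpow : (1 - t) ^ (n - 2) ≤ 1 :=
      pow_le_one₀ (by linarith) (by linarith [ht.1])
    have hn1 : (0:ℝ) ≤ (n:ℝ) - 1 := by
      have : (2:ℝ) ≤ n := by exact_mod_cast hn
      linarith
    have h1 : (n - 1 : ℝ) * (1 - t) ^ (n - 2) ≤ (n:ℝ) := by
      nlinarith [pow_nonneg (by linarith : (0:ℝ) ≤ 1 - t) (n-2)]
    exact mul_le_mul_of_nonneg_right h1 ht.1
  have hint : ∫ t in (0:ℝ)..q, (n - 1 : ℝ) * (1 - t) ^ (n - 2) * t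
      ≤ ∫ t in (0:ℝ)..q, (n:ℝ) * t := by
    apply intervalIntegral.integral_mono_on hq0
      ((Hfun_cont n).intervalIntegrable 0 q)
      ((by continuity : Continuous fun t : ℝ => (n:ℝ) * t).intervalIntegrable 0 q) hgle
  have hcalc : ∫ t in (0:ℝ)..q, (n:ℝ) * t = (n:ℝ) * (q ^ 2 / 2) := by
    rw [intervalIntegral.integral_const_mul, integral_id]; ring
  rw [hcalc] at hint
  nlinarith [sq_nonneg q]

theorem stmt_9 :
    (∀ n : ℕ, 2 ≤ n → ∀ q ∈ Set.Icc (0:ℝ) 1,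
        Hfun n q = ∫ t in (0:ℝ)..q, (n - 1 : ℝ) * (1 - t) ^ (n - 2) * t)
      ∧ ∃ c C : ℝ, 0 < c ∧ 0 < C ∧
          ∀ n : ℕ, 2 ≤ n → ∀ q ∈ Set.Icc (0:ℝ) 1,
            c * min (n * q ^ 2) (1 / n) ≤ Hfun n q ∧
              Hfun n q ≤ C * min (n * q ^ 2) (1 / n) := by
  constructor
  · intro n hn q _; exact Hfun_eq n hn q
  · refine ⟨1/12, 1, by norm_num, by norm_num, ?_⟩
    intro n hn q hq
    obtain ⟨hq0, hq1⟩ := hq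
    have hnpos : (0:ℝ) < n := by positivity
    constructor
    · rcases le_or_gt q (1/(n:ℝ)) with h | h
      · calc (1/12 : ℝ) * min ((n:ℝ) * q ^ 2) (1/(n:ℝ))
            ≤ (1/12 : ℝ) * ((n:ℝ) * q ^ 2) := by
              apply mul_le_mul_of_nonneg_left (min_le_left _ _) (by norm_num)
          _ ≤ Hfun n q := Hfun_lower_small n hn hq0 h
      · have h1n : 1/(n:ℝ) ≤ 1 := by
          rw [div_le_one hnpos]
          exact_mod_cast Nat.one_le_iff_ne_zero.mpr (by omega)
        calc (1/12 : ℝ) * min ((n:ℝ) * q ^ 2) (1/(n:ℝ))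
            ≤ (1/12 : ℝ) * (1/(n:ℝ)) := by
              apply mul_le_mul_of_nonneg_left (min_le_right _ _) (by norm_num)
          _ = (1/12 : ℝ) * ((n:ℝ) * (1/(n:ℝ)) ^ 2) := by
              field_simp
          _ ≤ Hfun n (1/(n:ℝ)) :=
              Hfun_lower_small n hn (by positivity) le_rfl
          _ ≤ Hfun n q := Hfun_mono n hn (by positivity) h.le hq1
    · rw [one_mul]
      exact le_min (Hfun_upper2 n hn hq0 hq1) (Hfun_upper1 n hn hq0 hq1)
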